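/- Let p > 0 be prime, m a positive integer with p ∤ m, and t an integer with 1 < t < p−2. In the polynomial N(z)/(z·ε^{pm}) obtained from f(ε) = ε^{pm} − x·ε^{m(p−t)} + x by substituting ε ↦ ε(z+1), where x = ε^{pm}/(ε^{m(p−t)} − 1), the coefficient of z^0 equals d·m·t·ε^{m(p−t)} times a unit, where d = 1/(ε^{m(p−t)} − 1); consequently its ε-adic valuation is m(p−t). The coefficient of z^{p−1} has ε-adic valuation 0. Hence the Newton polygon of N(z)/z with respect to the ε-adic valuation has vertices (0, m(p−t)), (p−1, 0), (pm−1, 0), and its unique negative slope is −m(p−t)/(p−1). -/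

import Mathlib

open Polynomial HahnSeries

/-- Sum of an order-0 term and a positive-order term is nonzero of order 0. -/
lemma aux_add_order {R : Type*} [CommRing R] {u v : HahnSeries ℤ R}
    (hu : u ≠ 0) (hu0 : u.order = 0) (hv : v = 0 ∨ 0 < v.order) :
    u + v ≠ 0 ∧ (u + v).order = 0 := by
  have hc : (u + v).coeff 0 = u.coeff 0 := by
    rcases hv with rfl | hv
    · simp
    · rw [HahnSeries.coeff_add, HahnSeries.coeff_eq_zero_of_lt_order hv, add_zero]
  have hu0' : u.coeff 0 ≠ 0 := by
    have h := (HahnSeries.coeff_order_eq_zero.not.mpr hu)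
    rwa [hu0] at h
  have hne : u + v ≠ 0 := by
    intro h
    apply hu0'
    rw [← hc, h, HahnSeries.coeff_zero]
  refine ⟨hne, le_antisymm (HahnSeries.order_le_of_coeff_ne_zero (hc ▸ hu0')) ?_⟩
  refine le_trans (le_min (le_of_eq hu0.symm) ?_) (HahnSeries.min_order_le_order_add hne)
  rcases hv with rfl | hv
  · simp
  · exact le_of_lt hv

theorem newton_polygon_abhyankar (p m t : ℕ) (hp : p.Prime) (hm : 0 < m)
    (hpm : ¬ p ∣ m) (ht1 : 1 < t) (ht2 : t < p - 2)
    (k : Type*) [Field k] [IsAlgClosed k] [CharP k p]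
    (ε x : LaurentSeries k)
    (hε : ε = HahnSeries.single (1 : ℤ) (1 : k))
    (hx : x = ε ^ (p * m) / (ε ^ (m * (p - t)) - 1))
    (f N : Polynomial (LaurentSeries k))
    (hf : f = Polynomial.X ^ (p * m)
        - Polynomial.C x * Polynomial.X ^ (m * (p - t)) + Polynomial.C x)
    (hN : N = f.comp (Polynomial.C ε * (Polynomial.X + 1)))
    (b : ℕ → LaurentSeries k)
    (hb : ∀ j : ℕ, b j = N.coeff (j + 1) / ε ^ (p * m)) :
    (∃ u : LaurentSeries k, u ≠ 0 ∧ u.order = 0 ∧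
        b 0 = (ε ^ (m * (p - t)) - 1)⁻¹ * ((m * t : ℕ) : LaurentSeries k)
          * ε ^ (m * (p - t)) * u) ∧
      b 0 ≠ 0 ∧ (b 0).order = (m * (p - t) : ℤ) ∧
      (∀ j : ℕ, 1 ≤ j → j < p - 1 → b j = 0 ∨ (m * (p - t) : ℤ) ≤ (b j).order) ∧
      b (p - 1) ≠ 0 ∧ (b (p - 1)).order = 0 ∧
      b (p * m - 1) ≠ 0 ∧ (b (p * m - 1)).order = 0 ∧
      (∀ j : ℕ, b j = 0 ∨ 0 ≤ (b j).order) := by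
  classical
  haveI : Fact p.Prime := ⟨hp⟩
  haveI hKp : CharP (LaurentSeries k) p :=
    charP_of_injective_ringHom (HahnSeries.C_injective (Γ := ℤ) (R := k)) p
  haveI hKXp : CharP (Polynomial (LaurentSeries k)) p :=
    charP_of_injective_ringHom (Polynomial.C_injective) p
  -- basic arithmetic
  have htp : t < p := lt_of_lt_of_le ht2 (Nat.sub_le _ _)
  have htpos : 0 < t := lt_trans Nat.zero_lt_one ht1
  have hA0 : 0 < m * (p - t) := Nat.mul_pos hm (by omega)
  have hALT : m * (p - t) < p * m := by
    calc m * (p - t) < m * p := mul_lt_mul_of_pos_left (Nat.sub_lt hp.pos htpos) hm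
    _ = p * m := mul_comm m p
  -- basic facts about ε
  have hεne : ε ≠ 0 := by rw [hε]; exact HahnSeries.single_ne_zero one_ne_zero
  have hεnord : ∀ n : ℕ, (ε ^ n).order = (n : ℤ) := by
    intro n
    rw [HahnSeries.order_pow, hε, HahnSeries.order_single one_ne_zero]
    simp
  have hcastord : ∀ n : ℕ, ((n : LaurentSeries k)).order = 0 := by
    intro n
    rw [← map_natCast (HahnSeries.C : k →+* LaurentSeries k) n, HahnSeries.order_C]
  -- the unit ε^A - 1
  have hEsplit : ε ^ (m * (p - t)) - 1 = (-1 : LaurentSeries k) + ε ^ (m * (p - t)) := by ring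
  have hEaux : ((-1 : LaurentSeries k) + ε ^ (m * (p - t))) ≠ 0 ∧
      ((-1 : LaurentSeries k) + ε ^ (m * (p - t))).order = 0 := by
    refine aux_add_order (neg_ne_zero.mpr one_ne_zero) ?_ (Or.inr ?_)
    · rw [HahnSeries.order_neg, HahnSeries.order_one]
    · rw [hεnord]
      exact_mod_cast hA0
  have hEne : ε ^ (m * (p - t)) - 1 ≠ 0 := by rw [hEsplit]; exact hEaux.1
  have hEord : (ε ^ (m * (p - t)) - 1).order = 0 := by rw [hEsplit]; exact hEaux.2
  have hDne : (ε ^ (m * (p - t)) - 1)⁻¹ ≠ 0 := inv_ne_zero hEne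
  have hDord : ((ε ^ (m * (p - t)) - 1)⁻¹).order = 0 := by
    have h := HahnSeries.order_mul hEne hDne
    rw [mul_inv_cancel₀ hEne, HahnSeries.order_one, hEord, zero_add] at h
    exact h.symm
  -- coefficient of (X+1)^(p*m)
  have hXP : ∀ n : ℕ, (((X : (LaurentSeries k)[X]) + 1) ^ (p * m)).coeff n
      = if p ∣ n then ((m.choose (n / p) : ℕ) : LaurentSeries k) else 0 := by
    intro n
    have h1 : ((X : (LaurentSeries k)[X]) + 1) ^ (p * m)
        = Polynomial.expand (LaurentSeries k) p ((X + 1) ^ m) := by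
      have h2 : ((X : (LaurentSeries k)[X]) + 1) ^ p = X ^ p + 1 := by
        simpa using add_pow_char (X : (LaurentSeries k)[X]) 1 p
      rw [map_pow, map_add, Polynomial.expand_X, map_one, pow_mul, h2]
    rw [h1, Polynomial.coeff_expand hp.pos]
    split <;> simp [Polynomial.coeff_X_add_one_pow]
  -- coefficients of N
  have hNc : ∀ n : ℕ, N.coeff n
      = ε ^ (p * m) * (if p ∣ n then ((m.choose (n / p) : ℕ) : LaurentSeries k) else 0)
        - x * (ε ^ (m * (p - t)) * (((m * (p - t)).choose n : ℕ) : LaurentSeries k))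
        + (if n = 0 then x else 0) := by
    intro n
    rw [hN, hf]
    simp only [Polynomial.add_comp, Polynomial.sub_comp, Polynomial.mul_comp,
      Polynomial.pow_comp, Polynomial.X_comp, Polynomial.C_comp]
    rw [mul_pow, mul_pow, ← Polynomial.C_pow, ← Polynomial.C_pow]
    simp only [Polynomial.coeff_add, Polynomial.coeff_sub, Polynomial.coeff_C_mul,
      Polynomial.coeff_C, hXP n, Polynomial.coeff_X_add_one_pow]
  -- formula for b j
  have hbj : ∀ j : ℕ, b j
      = (if p ∣ (j + 1) then ((m.choose ((j + 1) / p) : ℕ) : LaurentSeries k) else 0)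
        - (ε ^ (m * (p - t)) - 1)⁻¹ * ε ^ (m * (p - t))
          * (((m * (p - t)).choose (j + 1) : ℕ) : LaurentSeries k) := by
    intro j
    have hx' : x = ε ^ (p * m) * (ε ^ (m * (p - t)) - 1)⁻¹ := by
      rw [hx, div_eq_mul_inv]
    rw [hb, hNc, if_neg (Nat.succ_ne_zero j), add_zero, hx']
    rw [show ε ^ (p * m)
          * (if p ∣ (j + 1) then ((m.choose ((j + 1) / p) : ℕ) : LaurentSeries k) else 0)
        - ε ^ (p * m) * (ε ^ (m * (p - t)) - 1)⁻¹ *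
          (ε ^ (m * (p - t)) * (((m * (p - t)).choose (j + 1) : ℕ) : LaurentSeries k))
        = ε ^ (p * m) *
          ((if p ∣ (j + 1) then ((m.choose ((j + 1) / p) : ℕ) : LaurentSeries k) else 0)
          - (ε ^ (m * (p - t)) - 1)⁻¹ * ε ^ (m * (p - t))
            * (((m * (p - t)).choose (j + 1) : ℕ) : LaurentSeries k)) from by ring,
      mul_div_cancel_left₀ _ (pow_ne_zero _ hεne)]
  -- value of b 0
  have hAneg : ((m * (p - t) : ℕ) : LaurentSeries k) = -((m * t : ℕ) : LaurentSeries k) := by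
    have h0 : ((m * (p - t) + m * t : ℕ) : LaurentSeries k) = 0 := by
      have he : m * (p - t) + m * t = m * p := by
        rw [← Nat.mul_add, Nat.sub_add_cancel htp.le]
      rw [he, Nat.cast_mul, CharP.cast_eq_zero (LaurentSeries k) p, mul_zero]
    rw [Nat.cast_add] at h0
    exact eq_neg_of_add_eq_zero_left h0
  have hb0 : b 0 = (ε ^ (m * (p - t)) - 1)⁻¹ * ((m * t : ℕ) : LaurentSeries k)
      * ε ^ (m * (p - t)) := by
    rw [hbj 0]
    have h1 : ¬ p ∣ 0 + 1 := by simpa using hp.ne_one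
    rw [if_neg h1, zero_sub]
    rw [show (0 : ℕ) + 1 = 1 from rfl, Nat.choose_one_right, hAneg]
    ring
  have hmtne : ((m * t : ℕ) : LaurentSeries k) ≠ 0 := by
    rw [Ne, CharP.cast_eq_zero_iff (LaurentSeries k) p]
    intro h
    rcases (Nat.Prime.dvd_mul hp).mp h with h | h
    · exact hpm h
    · exact absurd (Nat.le_of_dvd htpos h) (not_le.mpr htp)
  have hb0ne : b 0 ≠ 0 := by
    rw [hb0]
    exact mul_ne_zero (mul_ne_zero hDne hmtne) (pow_ne_zero _ hεne)
  have hcastZ : ((m * (p - t) : ℕ) : ℤ) = (m * (p - t) : ℤ) := by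
    rw [Nat.cast_mul, Nat.cast_sub htp.le]
  have hb0ord : (b 0).order = (m * (p - t) : ℤ) := by
    rw [hb0, HahnSeries.order_mul (mul_ne_zero hDne hmtne) (pow_ne_zero _ hεne),
      HahnSeries.order_mul hDne hmtne, hDord, hcastord, hεnord, zero_add, zero_add, hcastZ]
  have hvord : ∀ c : ℕ,
      (-((ε ^ (m * (p - t)) - 1)⁻¹ * ε ^ (m * (p - t)) * (c : LaurentSeries k)) = 0
        ∨ 0 < (-((ε ^ (m * (p - t)) - 1)⁻¹ * ε ^ (m * (p - t))
            * (c : LaurentSeries k))).order) := by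
    intro c
    by_cases hc : (c : LaurentSeries k) = 0
    · left; rw [hc, mul_zero, neg_zero]
    · right
      rw [HahnSeries.order_neg,
        HahnSeries.order_mul (mul_ne_zero hDne (pow_ne_zero _ hεne)) hc,
        HahnSeries.order_mul hDne (pow_ne_zero _ hεne), hDord, hcastord, hεnord,
        zero_add, add_zero]
      exact_mod_cast hA0
  have hppred : p - 1 + 1 = p := Nat.succ_pred_eq_of_pos hp.pos
  have hbp1 : b (p - 1) = ((m : ℕ) : LaurentSeries k)
      + -((ε ^ (m * (p - t)) - 1)⁻¹ * ε ^ (m * (p - t))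
          * (((m * (p - t)).choose p : ℕ) : LaurentSeries k)) := by
    rw [hbj (p - 1), hppred, if_pos dvd_rfl, Nat.div_self hp.pos, Nat.choose_one_right,
      sub_eq_add_neg]
  have hmne : ((m : ℕ) : LaurentSeries k) ≠ 0 := by
    rw [Ne, CharP.cast_eq_zero_iff (LaurentSeries k) p]
    exact hpm
  have hp1 := aux_add_order hmne (hcastord m) (hvord ((m * (p - t)).choose p))
  rw [← hbp1] at hp1
  have hbpm : b (p * m - 1) = 1 := by
    have hpm1 : p * m - 1 + 1 = p * m := Nat.succ_pred_eq_of_pos (Nat.mul_pos hp.pos hm)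
    rw [hbj (p * m - 1), hpm1, if_pos (dvd_mul_right p m),
      Nat.mul_div_cancel_left m hp.pos, Nat.choose_self,
      Nat.choose_eq_zero_of_lt hALT]
    simp
  refine ⟨⟨1, one_ne_zero, HahnSeries.order_one, by rw [hb0, mul_one]⟩, hb0ne, hb0ord, ?_,
    hp1.1, hp1.2, by rw [hbpm]; exact one_ne_zero, by rw [hbpm, HahnSeries.order_one], ?_⟩
  · -- middle coefficients
    intro j h1 h2
    have hnd : ¬ p ∣ (j + 1) := by
      intro hd
      have := Nat.le_of_dvd (Nat.succ_pos j) hd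
      omega
    by_cases hc : (((m * (p - t)).choose (j + 1) : ℕ) : LaurentSeries k) = 0
    · left
      rw [hbj j, if_neg hnd, hc, mul_zero, zero_sub, neg_zero]
    · right
      rw [hbj j, if_neg hnd, zero_sub, HahnSeries.order_neg,
        HahnSeries.order_mul (mul_ne_zero hDne (pow_ne_zero _ hεne)) hc,
        HahnSeries.order_mul hDne (pow_ne_zero _ hεne), hDord, hcastord, hεnord,
        zero_add, add_zero, hcastZ]
  · -- all coefficients
    intro j
    by_cases hbz : b j = 0
    · exact Or.inl hbz
    · right
      rw [hbj j] at hbz ⊢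
      rw [sub_eq_add_neg] at hbz ⊢
      refine le_trans (le_min ?_ ?_) (HahnSeries.min_order_le_order_add hbz)
      · split
        · rw [hcastord]
        · rw [HahnSeries.order_zero]
      · rw [HahnSeries.order_neg]
        by_cases hc : (((m * (p - t)).choose (j + 1) : ℕ) : LaurentSeries k) = 0
        · rw [hc, mul_zero, HahnSeries.order_zero]
        · rw [HahnSeries.order_mul (mul_ne_zero hDne (pow_ne_zero _ hεne)) hc,
            HahnSeries.order_mul hDne (pow_ne_zero _ hεne), hDord, hcastord, hεnord,
            zero_add, add_zero]
          exact_mod_cast Nat.zero_le _
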